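/- For all x, y in the unit ball B^n, j(x,y) ≤ (1 + min(|x|,|y|))·c(x,y) ≤ 2·c(x,y), where j is the distance ratio metric and c the Cassinian metric of B^n. -/

import Mathlib

open Metric Set

abbrev E (n : ℕ) := EuclideanSpace ℝ (Fin n)

/-- The Cassinian metric of a domain `D`. -/
noncomputable def cassinian {n : ℕ} (D : Set (E n)) (x y : E n) : ℝ :=
  ⨆ p : frontier D, dist x y / (dist x (p : E n) * dist (p : E n) y)

/-- The distance ratio metric of the unit ball, where δ(x) = 1 - |x|. -/
noncomputable def jBall {n : ℕ} (x y : E n) : ℝ :=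
  Real.log (1 + dist x y / min (1 - ‖x‖) (1 - ‖y‖))

lemma frontier_unit_ball (n : ℕ) :
    frontier (ball (0 : E n) 1) = sphere (0 : E n) 1 :=
  frontier_ball 0 one_ne_zero

lemma cassinian_bdd {n : ℕ} (x y : E n) (hx : ‖x‖ < 1) (hy : ‖y‖ < 1) :
    BddAbove (Set.range fun p : frontier (ball (0 : E n) 1) =>
      dist x y / (dist x (p : E n) * dist (p : E n) y)) := by
  refine ⟨dist x y / ((1 - ‖x‖) * (1 - ‖y‖)), ?_⟩
  rintro _ ⟨p, rfl⟩
  have hp : ‖(p : E n)‖ = 1 := by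
    have h : (p : E n) ∈ sphere (0 : E n) 1 := by
      rw [← frontier_unit_ball]; exact p.2
    simpa [mem_sphere_zero_iff_norm] using h
  have h1 : 1 - ‖x‖ ≤ dist x (p : E n) := by
    have h := norm_sub_norm_le (p : E n) x
    rw [hp] at h
    calc 1 - ‖x‖ ≤ ‖(p : E n) - x‖ := h
      _ = dist x (p : E n) := by rw [dist_eq_norm, norm_sub_rev]
  have h2 : 1 - ‖y‖ ≤ dist (p : E n) y := by
    have h := norm_sub_norm_le (p : E n) y
    rw [hp] at h
    calc 1 - ‖y‖ ≤ ‖(p : E n) - y‖ := h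
      _ = dist (p : E n) y := (dist_eq_norm _ _).symm
  have hx' : (0:ℝ) < 1 - ‖x‖ := by linarith
  have hy' : (0:ℝ) < 1 - ‖y‖ := by linarith
  have hbig : (1 - ‖x‖) * (1 - ‖y‖) ≤ dist x (p : E n) * dist (p : E n) y :=
    mul_le_mul h1 h2 hy'.le dist_nonneg
  show dist x y / (dist x (p : E n) * dist (p : E n) y) ≤
    dist x y / ((1 - ‖x‖) * (1 - ‖y‖))
  gcongr dist x y / ?_

lemma cassinian_comm {n : ℕ} (D : Set (E n)) (x y : E n) :
    cassinian D x y = cassinian D y x := by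
  unfold cassinian
  congr 1
  funext p
  rw [dist_comm x y, dist_comm x (p : E n), dist_comm (p : E n) y, mul_comm]

lemma jBall_comm {n : ℕ} (x y : E n) : jBall x y = jBall y x := by
  unfold jBall
  rw [dist_comm, min_comm]

lemma cassinian_nonneg {n : ℕ} (D : Set (E n)) (x y : E n) :
    0 ≤ cassinian D x y :=
  Real.iSup_nonneg fun p => by positivity

lemma key {n : ℕ} (x y : E n) (hx : ‖x‖ < 1) (hy : ‖y‖ < 1) (hyx : ‖y‖ ≤ ‖x‖) :
    jBall x y ≤ (1 + ‖y‖) * cassinian (ball (0 : E n) 1) x y := by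
  have hx' : (0:ℝ) < 1 - ‖x‖ := by linarith
  by_cases hx0 : x = 0
  · have hy0 : y = 0 := by
      have : ‖y‖ ≤ 0 := by simpa [hx0] using hyx
      simpa using le_antisymm this (norm_nonneg y)
    have : jBall x y = 0 := by simp [jBall, hx0, hy0]
    rw [this]
    have := cassinian_nonneg (ball (0 : E n) 1) x y
    nlinarith [norm_nonneg y]
  · have hxpos : 0 < ‖x‖ := norm_pos_iff.mpr hx0
    set p : E n := ‖x‖⁻¹ • x with hp
    have hpn : ‖p‖ = 1 := by
      rw [hp, norm_smul, norm_inv, norm_norm, inv_mul_cancel₀ (ne_of_gt hxpos)]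
    have hpf : p ∈ frontier (ball (0 : E n) 1) := by
      rw [frontier_unit_ball, mem_sphere_zero_iff_norm]; exact hpn
    have hdxp : dist x p = 1 - ‖x‖ := by
      have hxe : x - p = (1 - ‖x‖⁻¹) • x := by
        rw [hp, sub_smul, one_smul]
      rw [dist_eq_norm, hxe, norm_smul, Real.norm_eq_abs]
      have h1 : (1:ℝ) < ‖x‖⁻¹ := (one_lt_inv₀ hxpos).mpr hx
      rw [abs_of_nonpos (by linarith)]
      field_simp
      ring
    have hdpy_pos : 0 < dist p y := by
      rw [dist_pos]
      intro h
      rw [h] at hpn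
      linarith [hpn ▸ hy]
    have hdpy_le : dist p y ≤ 1 + ‖y‖ := by
      calc dist p y = ‖p - y‖ := dist_eq_norm _ _
        _ ≤ ‖p‖ + ‖y‖ := norm_sub_le _ _
        _ = 1 + ‖y‖ := by rw [hpn]
    set d := dist x y with hd
    have hdn : 0 ≤ d := dist_nonneg
    have h1 : jBall x y ≤ d / (1 - ‖x‖) := by
      have hmin : min (1 - ‖x‖) (1 - ‖y‖) = 1 - ‖x‖ := min_eq_left (by linarith)
      unfold jBall
      rw [← hd, hmin]
      have hpos : (0:ℝ) < 1 + d / (1 - ‖x‖) := by positivity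
      have := Real.log_le_sub_one_of_pos hpos
      linarith
    have h2 : d / (1 - ‖x‖) ≤ (1 + ‖y‖) * (d / (dist x p * dist p y)) := by
      rw [hdxp]
      have heq : (1 + ‖y‖) * (d / ((1 - ‖x‖) * dist p y)) =
          (d / (1 - ‖x‖)) * ((1 + ‖y‖) / dist p y) := by
        field_simp
      rw [heq]
      exact le_mul_of_one_le_right (by positivity)
        ((one_le_div hdpy_pos).mpr hdpy_le)
    have h3 : d / (dist x p * dist p y) ≤ cassinian (ball (0 : E n) 1) x y := by
      unfold cassinian
      rw [← hd]
      exact le_ciSup (cassinian_bdd x y hx hy) (⟨p, hpf⟩ : frontier (ball (0 : E n) 1))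
    calc jBall x y ≤ d / (1 - ‖x‖) := h1
      _ ≤ (1 + ‖y‖) * (d / (dist x p * dist p y)) := h2
      _ ≤ (1 + ‖y‖) * cassinian (ball (0 : E n) 1) x y :=
          mul_le_mul_of_nonneg_left h3 (by positivity)

theorem jBall_le_cassinian (n : ℕ) (hn : 2 ≤ n) (x y : E n)
    (hx : x ∈ ball (0 : E n) 1) (hy : y ∈ ball (0 : E n) 1) :
    jBall x y ≤ (1 + min ‖x‖ ‖y‖) * cassinian (ball (0 : E n) 1) x y ∧
      (1 + min ‖x‖ ‖y‖) * cassinian (ball (0 : E n) 1) x y ≤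
        2 * cassinian (ball (0 : E n) 1) x y := by
  rw [mem_ball_zero_iff] at hx hy
  have hc := cassinian_nonneg (ball (0 : E n) 1) x y
  constructor
  · rcases le_total ‖y‖ ‖x‖ with h | h
    · have hmin : min ‖x‖ ‖y‖ = ‖y‖ := min_eq_right h
      rw [hmin]
      exact key x y hx hy h
    · have hmin : min ‖x‖ ‖y‖ = ‖x‖ := min_eq_left h
      rw [hmin, jBall_comm, cassinian_comm]
      exact key y x hy hx h
  · nlinarith [min_le_left ‖x‖ ‖y‖]
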